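/- Let P be a forward synchronized (τ,δ)-partitioning set of S and let S'_P be the string of length |P| obtained by replacing each block by the rank of its representative string (where representative strings are defined so that equal representative strings imply equal blocks, and the lexicographic order of representatives agrees with the order of suffixes when representatives differ). Then for any two distinct positions p_i, p_j ∈ P: S[p_i..n] < S[p_j..n] lexicographically if and only if S'_P[i..|P|] < S'_P[j..|P|] lexicographically. -/

import Mathlib

/-- `S[k] = S[k+p]` for all positions `k` with `a ≤ k` and `k + p ≤ b`,
i.e. `p` is a period of the substring `S[a..b]`. -/
def HasPeriodOn {α : Type*} (S : ℕ → α) (a b p : ℕ) : Prop :=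
  ∀ k, a ≤ k → k + p ≤ b → S k = S (k + p)

/-- `ℓ = LCE(i,j)`: the first `ℓ` characters of the suffixes starting at `i`
and `j` agree, and the next ones differ. -/
def IsLCE {α : Type*} (S : ℕ → α) (i j ℓ : ℕ) : Prop :=
  (∀ k < ℓ, S (i + k) = S (j + k)) ∧ S (i + ℓ) ≠ S (j + ℓ)

/-- `P ⊆ [n]` is a `(τ,δ)`-partitioning set of the length-`n` string `S`. -/
structure PartitioningSet {α : Type*} (S : ℕ → α) (n τ δ : ℕ) (P : Set ℕ) : Prop where
  one_le_τ : 1 ≤ τ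
  τ_le_δ : τ ≤ δ
  δ_le_n : δ ≤ n
  subset : P ⊆ Set.Icc 1 n
  /-- Local consistency: for `i, j ∈ [1+δ..n-δ]` with
  `S[i-δ..i+δ] = S[j-δ..j+δ]` we have `i ∈ P ↔ j ∈ P`. -/
  localConsistency : ∀ i j, 1 + δ ≤ i → i ≤ n - δ → 1 + δ ≤ j → j ≤ n - δ →
    (∀ k ≤ 2 * δ, S (i - δ + k) = S (j - δ + k)) → (i ∈ P ↔ j ∈ P)
  /-- Compactness: consecutive positions of `P ∪ {1, n+1}` are at distance
  at most `τ`, or delimit a block that is periodic with period length at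
  most `τ`. -/
  compactness : ∀ p q, p ∈ P ∪ {1, n + 1} → q ∈ P ∪ {1, n + 1} → p < q →
    (∀ r ∈ P ∪ {1, n + 1}, ¬(p < r ∧ r < q)) →
    q - p ≤ τ ∨ ∃ ρ, 1 ≤ ρ ∧ ρ ≤ τ ∧ HasPeriodOn S p (q - 1) ρ


lemma myLex.cons_ne {β : Type*} [LinearOrder β] {a b : β} (hab : a ≠ b) (u v : List β) :
    a :: u < b :: v ↔ a < b := by
  constructor
  · intro hl
    cases hl with
    | rel h => exact h
    | cons h => exact absurd rfl hab
  · intro h; exact List.Lex.rel h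

lemma myLex.cons_same {β : Type*} [LinearOrder β] (a : β) (u v : List β) :
    a :: u < a :: v ↔ u < v := List.cons_lt_cons_self

lemma myLex.append_left {β : Type*} [LinearOrder β] (x u v : List β) :
    x ++ u < x ++ v ↔ u < v := by
  induction x with
  | nil => rfl
  | cons a x ih => simpa [myLex.cons_same] using ih

lemma myLex.nil_lt {β : Type*} [LinearOrder β] {l : List β} (hl : l ≠ []) :
    ([] : List β) < l := by
  cases l with
  | nil => exact absurd rfl hl
  | cons a t => exact List.nil_lt_cons a t

lemma ssa_aux {α : Type*} [LinearOrder α] (S : ℕ → α)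
    (n h : ℕ) (p : ℕ → ℕ) (rep : ℕ → List α)
    (hmono : StrictMonoOn p (Set.Icc 1 (h + 1)))
    (hlast : p (h + 1) = n + 1)
    (hrep_eq : ∀ i j, 1 ≤ i → i ≤ h → 1 ≤ j → j ≤ h → rep i = rep j →
      (List.range (p (i + 1) - p i)).map (fun t => S (p i + t)) =
        (List.range (p (j + 1) - p j)).map (fun t => S (p j + t)))
    (hrep_lt : ∀ i j, 1 ≤ i → i ≤ h → 1 ≤ j → j ≤ h → rep i ≠ rep j →
      (((List.range (n + 1 - p i)).map (fun t => S (p i + t)) <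
          (List.range (n + 1 - p j)).map (fun t => S (p j + t))) ↔
        rep i < rep j)) :
    ∀ m i j, 1 ≤ i → i ≤ h → 1 ≤ j → j ≤ h → i ≠ j → h - i ≤ m →
    (((List.range (n + 1 - p i)).map (fun t => S (p i + t)) <
        (List.range (n + 1 - p j)).map (fun t => S (p j + t))) ↔
      ((List.range (h + 1 - i)).map (fun m => rep (i + m)) <
        (List.range (h + 1 - j)).map (fun m => rep (j + m)))) := by
  have hplt : ∀ i, 1 ≤ i → i ≤ h → p i < p (i + 1) := by
    intro i h1 h2
    exact hmono ⟨h1, by omega⟩ ⟨by omega, by omega⟩ (by omega)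
  have hple : ∀ i, 1 ≤ i → i ≤ h + 1 → p i ≤ n + 1 := by
    intro i h1 h2
    rcases eq_or_lt_of_le h2 with rfl | h2
    · exact hlast.le
    · have := hmono ⟨h1, h2.le⟩ ⟨by omega, le_rfl⟩ h2
      omega
  have hsuf : ∀ i, 1 ≤ i → i ≤ h →
      (List.range (n + 1 - p i)).map (fun t => S (p i + t)) =
        (List.range (p (i + 1) - p i)).map (fun t => S (p i + t)) ++
          (List.range (n + 1 - p (i + 1))).map (fun t => S (p (i + 1) + t)) := by
    intro i h1 h2
    have h3 := hplt i h1 h2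
    have h4 := hple (i + 1) (by omega) (by omega)
    have heq : n + 1 - p i = (p (i + 1) - p i) + (n + 1 - p (i + 1)) := by omega
    rw [heq, List.range_add, List.map_append, List.map_map]
    congr 1
    apply List.map_congr_left
    intro t _
    simp only [Function.comp_apply]
    congr 1
    omega
  have hrepdec : ∀ i, 1 ≤ i → i ≤ h →
      (List.range (h + 1 - i)).map (fun m => rep (i + m)) =
        rep i :: (List.range (h + 1 - (i + 1))).map (fun m => rep (i + 1 + m)) := by
    intro i h1 h2
    have heq : h + 1 - i = 1 + (h + 1 - (i + 1)) := by omega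
    rw [heq, List.range_add, List.map_append, List.map_map]
    rw [show List.range 1 = [0] from rfl]
    simp only [List.map_cons, List.map_nil, List.singleton_append, Nat.add_zero,
      List.cons.injEq]
    refine ⟨trivial, ?_⟩
    apply List.map_congr_left
    intro t _
    simp only [Function.comp_apply]
    congr 1
    omega
  intro m
  induction m using Nat.strong_induction_on with
  | _ m IH =>
  intro i j hi hi' hj hj' hij hm
  by_cases hr : rep i = rep j
  · have hblock := hrep_eq i j hi hi' hj hj' hr
    rw [hsuf i hi hi', hsuf j hj hj', hrepdec i hi hi', hrepdec j hj hj', hblock, hr,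
      myLex.append_left, myLex.cons_same]
    by_cases hih : i = h
    · subst hih
      have hjh : j < i := by omega
      rw [show n + 1 - p (i + 1) = 0 by rw [hlast]; omega,
        show i + 1 - (i + 1) = 0 by omega]
      simp only [List.range_zero, List.map_nil]
      have h1 : p (j + 1) < n + 1 := by
        rw [← hlast]; exact hmono ⟨by omega, by omega⟩ ⟨by omega, le_rfl⟩ (by omega)
      constructor
      · intro _
        apply myLex.nil_lt
        simp only [ne_eq, List.map_eq_nil_iff, List.range_eq_nil]
        omega
      · intro _
        apply myLex.nil_lt
        simp only [ne_eq, List.map_eq_nil_iff, List.range_eq_nil]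
        omega
    · by_cases hjh : j = h
      · subst hjh
        rw [show n + 1 - p (j + 1) = 0 by rw [hlast]; omega,
          show j + 1 - (j + 1) = 0 by omega]
        simp only [List.range_zero, List.map_nil]
        constructor
        · intro hx; exact absurd hx (List.not_lt_nil _)
        · intro hx; exact absurd hx (List.not_lt_nil _)
      · have hm1 : 1 ≤ m := by omega
        exact IH (m - 1) (by omega) (i + 1) (j + 1) (by omega) (by omega) (by omega)
          (by omega) (by omega) (by omega)
  · rw [hrep_lt i j hi hi' hj hj' hr, hrepdec i hi hi', hrepdec j hj hj',
      myLex.cons_ne hr]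

/-- Let `P = {p 1 < ... < p h}` (with sentinel `p (h+1) = n+1`) be a forward
synchronized `(τ,δ)`-partitioning set of `S`, and let each block
`[p i..p (i+1) - 1]` have a representative string `rep i` such that equal
representatives imply equal blocks and, for distinct representatives, the
lexicographic order of the representatives agrees with the lexicographic
order of the corresponding suffixes of `S`.  Let `S'_P` be the string whose
`i`-th character is (order isomorphic to) the rank of `rep i`; its suffix
starting at `i` is `rep i, rep (i+1), ..., rep h` compared lexicographically.
Then for distinct `i, j`: `S[p i..n] < S[p j..n]` iff
`S'_P[i..h] < S'_P[j..h]`. -/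
theorem ssa_of_blocks {α : Type*} [LinearOrder α] (S : ℕ → α)
    (n τ δ h : ℕ) (p : ℕ → ℕ) (rep : ℕ → List α)
    (hh : 1 ≤ h)
    (hmono : StrictMonoOn p (Set.Icc 1 (h + 1)))
    (hp1 : 1 ≤ p 1) (hlast : p (h + 1) = n + 1)
    (hP : PartitioningSet S n τ δ {x | ∃ i, 1 ≤ i ∧ i ≤ h ∧ x = p i})
    -- `P` is forward synchronized
    (hsync : ∀ i j, 1 ≤ i → i ≤ h → 1 ≤ j → j ≤ h →
      (∀ k ≤ p (i + 1) - p i + δ, S (p i + k) = S (p j + k)) →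
      p (i + 1) - p i = p (j + 1) - p j)
    -- equal representative strings imply equal blocks
    (hrep_eq : ∀ i j, 1 ≤ i → i ≤ h → 1 ≤ j → j ≤ h → rep i = rep j →
      (List.range (p (i + 1) - p i)).map (fun t => S (p i + t)) =
        (List.range (p (j + 1) - p j)).map (fun t => S (p j + t)))
    -- distinct representatives order exactly as the corresponding suffixes
    (hrep_lt : ∀ i j, 1 ≤ i → i ≤ h → 1 ≤ j → j ≤ h → rep i ≠ rep j →
      (((List.range (n + 1 - p i)).map (fun t => S (p i + t)) <
          (List.range (n + 1 - p j)).map (fun t => S (p j + t))) ↔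
        rep i < rep j))
    (i j : ℕ) (hi : 1 ≤ i) (hi' : i ≤ h) (hj : 1 ≤ j) (hj' : j ≤ h)
    (hij : i ≠ j) :
    ((List.range (n + 1 - p i)).map (fun t => S (p i + t)) <
        (List.range (n + 1 - p j)).map (fun t => S (p j + t))) ↔
      ((List.range (h + 1 - i)).map (fun m => rep (i + m)) <
        (List.range (h + 1 - j)).map (fun m => rep (j + m))) := by
  exact ssa_aux S n h p rep hmono hlast hrep_eq hrep_lt (h - i) i j hi hi' hj hj' hij le_rfl
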